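/- Let {μ_k} be projections onto m orthonormal product vectors forming an orthogonal UPB, p a probability vector, μ(p) = Σ p_k μ_k, b = 1/max_k p_k, and ρ(p) = (1/(N−b))(I − b μ(p)) with b < N. Then ρ(p) is a density matrix with nontrivial null space (hence on the boundary of D), and if p_max < 1/m + (ε/m)·(N−m)/(m−Nε), where ε/m = inf{Tr(μ₀σ) : σ separable} and μ₀ = (1/m)Σμ_k, then Tr(μ₀ρ(p)) < ε/m and hence ρ(p) is inseparable. -/

import Mathlib

open Matrix
open scoped ComplexOrder

/-- The rank-one projection `|φ⟩⟨φ|`. -/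
def outer {n : Type*} [Fintype n] (φ : n → ℂ) : Matrix n n ℂ :=
  Matrix.vecMulVec φ (star φ)

/-- The set of separable densities on `ℂ^{d₁} ⊗ ℂ^{d₂}`. -/
def SepSet (d₁ d₂ : ℕ) : Set (Matrix (Fin d₁ × Fin d₂) (Fin d₁ × Fin d₂) ℂ) :=
  convexHull ℝ {M | ∃ (a : Fin d₁ → ℂ) (b : Fin d₂ → ℂ),
    star a ⬝ᵥ a = 1 ∧ star b ⬝ᵥ b = 1 ∧ M = outer (fun p => a p.1 * b p.2)}

lemma outer_mulVec {n : Type*} [Fintype n] (ψ x : n → ℂ) :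
    (outer ψ) *ᵥ x = (star ψ ⬝ᵥ x) • ψ := by
  funext i
  simp only [outer, mulVec, dotProduct, vecMulVec_apply, Pi.smul_apply, smul_eq_mul,
    Finset.mul_sum, Pi.star_apply]
  rw [Finset.sum_mul]
  congr 1; ext j; ring

lemma trace_outer_mul {n : Type*} [Fintype n] (u : n → ℂ) (M : Matrix n n ℂ) :
    Matrix.trace (outer u * M) = star u ⬝ᵥ (M *ᵥ u) := by
  simp only [Matrix.trace, Matrix.diag, Matrix.mul_apply, outer, vecMulVec_apply, dotProduct,
    mulVec, Pi.star_apply]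
  rw [Finset.sum_comm]
  congr 1; ext j
  rw [Finset.mul_sum]
  congr 1; ext i
  ring

lemma dot_star_comm {n : Type*} [Fintype n] (u v : n → ℂ) :
    star u ⬝ᵥ v = star (star v ⬝ᵥ u) := by
  simp only [dotProduct, Pi.star_apply, star_sum, star_mul', star_star]
  congr 1; ext j; ring

lemma outer_isHermitian {n : Type*} [Fintype n] (u : n → ℂ) : (outer u).IsHermitian := by
  ext i j
  simp [outer, Matrix.conjTranspose_apply, vecMulVec_apply, mul_comm]

lemma dotProduct_sum' {n : Type*} [Fintype n] {ι : Type*} (s : Finset ι) (u : n → ℂ)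
    (f : ι → n → ℂ) : u ⬝ᵥ (∑ k ∈ s, f k) = ∑ k ∈ s, u ⬝ᵥ f k := by
  simp only [dotProduct, Finset.sum_apply, Finset.mul_sum]
  exact Finset.sum_comm

lemma sum_dotProduct' {n : Type*} [Fintype n] {ι : Type*} (s : Finset ι) (u : n → ℂ)
    (f : ι → n → ℂ) : (∑ k ∈ s, f k) ⬝ᵥ u = ∑ k ∈ s, f k ⬝ᵥ u := by
  simp only [dotProduct, Finset.sum_apply, Finset.sum_mul]
  exact Finset.sum_comm

lemma sum_mulVec' {n : Type*} [Fintype n] {ι : Type*} (s : Finset ι)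
    (f : ι → Matrix n n ℂ) (x : n → ℂ) : (∑ k ∈ s, f k) *ᵥ x = ∑ k ∈ s, (f k) *ᵥ x := by
  funext i
  simp only [mulVec, dotProduct, Finset.sum_apply, Matrix.sum_apply, Finset.sum_mul]
  exact Finset.sum_comm

lemma dot_star_self_eq {n : Type*} [Fintype n] (u : n → ℂ) :
    star u ⬝ᵥ u = ((∑ i, Complex.normSq (u i) : ℝ) : ℂ) := by
  push_cast
  refine Finset.sum_congr rfl fun i _ => ?_
  exact Complex.normSq_eq_conj_mul_self.symm

lemma bessel {n : Type*} [Fintype n] {m : ℕ} (φ : Fin m → n → ℂ)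
    (horth : ∀ k l, star (φ k) ⬝ᵥ φ l = if k = l then 1 else 0) (x : n → ℂ) :
    ∑ k, Complex.normSq (star (φ k) ⬝ᵥ x) ≤ ∑ i, Complex.normSq (x i) := by
  set c : Fin m → ℂ := fun k => star (φ k) ⬝ᵥ x with hc
  set y : n → ℂ := x - ∑ k, c k • φ k with hy
  have h0 : 0 ≤ star y ⬝ᵥ y := dotProduct_star_self_nonneg y
  have hxs : star x ⬝ᵥ (∑ k, c k • φ k) = ∑ k, (Complex.normSq (c k) : ℂ) := by
    rw [dotProduct_sum']
    refine Finset.sum_congr rfl fun k _ => ?_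
    rw [dotProduct_smul, dot_star_comm x (φ k), smul_eq_mul]
    exact Complex.mul_conj (c k)
  have hsx : (star (∑ k, c k • φ k)) ⬝ᵥ x = ∑ k, (Complex.normSq (c k) : ℂ) := by
    rw [star_sum, sum_dotProduct']
    refine Finset.sum_congr rfl fun k _ => ?_
    rw [star_smul, smul_dotProduct, smul_eq_mul]
    exact Complex.normSq_eq_conj_mul_self.symm
  have hss : (star (∑ k, c k • φ k)) ⬝ᵥ (∑ k, c k • φ k) = ∑ k, (Complex.normSq (c k) : ℂ) := by
    rw [star_sum, sum_dotProduct']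
    refine Finset.sum_congr rfl fun k _ => ?_
    rw [star_smul, smul_dotProduct, dotProduct_sum']
    rw [Finset.sum_eq_single k (fun l _ hl => by
      rw [dotProduct_smul, horth k l, if_neg (Ne.symm hl)]; simp) (by simp)]
    rw [dotProduct_smul, horth k k, if_pos rfl, smul_eq_mul, smul_eq_mul, mul_one]
    exact Complex.normSq_eq_conj_mul_self.symm
  have hyy : star y ⬝ᵥ y =
      (((∑ i, Complex.normSq (x i)) - ∑ k, Complex.normSq (c k) : ℝ) : ℂ) := by
    rw [hy, show star (x - ∑ k, c k • φ k) = star x - star (∑ k, c k • φ k) from star_sub _ _,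
      sub_dotProduct, dotProduct_sub, dotProduct_sub, hxs, hsx, hss, dot_star_self_eq]
    push_cast
    ring
  rw [hyy, Complex.zero_le_real] at h0
  linarith


set_option maxHeartbeats 1000000

/-- Far-face construction from an orthogonal UPB: with `μ(p) = ∑ p_k μ_k`,
`b = 1/p_max` and `ρ(p) = (1/(N-b))(I - b μ(p))`, the matrix `ρ(p)` is a density with
`|φ_max⟩` in its null space (hence `ρ(p)` lies on the boundary of `D`), and if
`p_max < 1/m + (ε/m)(N-m)/(m-Nε)`, where `ε/m = inf {Tr(μ₀σ) : σ ∈ S}`,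
then `Tr(μ₀ ρ(p)) < ε/m` and `ρ(p)` is inseparable. -/
theorem stmt9 {d₁ d₂ m N : ℕ} (hN : N = d₁ * d₂) (hm : m < N) (hm0 : 0 < m)
    (α : Fin m → Fin d₁ → ℂ) (β : Fin m → Fin d₂ → ℂ)
    (φ : Fin m → Fin d₁ × Fin d₂ → ℂ)
    (hprod : ∀ k, φ k = fun p => α k p.1 * β k p.2)
    (horth : ∀ k l, star (φ k) ⬝ᵥ φ l = if k = l then 1 else 0)
    (hUPB : ∀ (a : Fin d₁ → ℂ) (b : Fin d₂ → ℂ),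
      (∀ k, star (fun p : Fin d₁ × Fin d₂ => a p.1 * b p.2) ⬝ᵥ φ k = 0) →
      (fun p : Fin d₁ × Fin d₂ => a p.1 * b p.2) = 0)
    (μ₀ : Matrix (Fin d₁ × Fin d₂) (Fin d₁ × Fin d₂) ℂ)
    (hμ₀ : μ₀ = (m : ℂ)⁻¹ • ∑ k, outer (φ k))
    (ε : ℝ)
    (hε : ε / m = sInf ((fun σ => (Matrix.trace (μ₀ * σ)).re) '' SepSet d₁ d₂))
    (hεpos : 0 < ε) (hεsmall : N * ε / m < 1)
    (p : Fin m → ℝ) (hp : ∀ k, 0 ≤ p k) (hpsum : ∑ k, p k = 1)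
    (kmax : Fin m) (hkmax : ∀ k, p k ≤ p kmax)
    (μp : Matrix (Fin d₁ × Fin d₂) (Fin d₁ × Fin d₂) ℂ)
    (hμp : μp = ∑ k, (p k : ℂ) • outer (φ k))
    (b : ℝ) (hb : b = (p kmax)⁻¹)
    (ρp : Matrix (Fin d₁ × Fin d₂) (Fin d₁ × Fin d₂) ℂ)
    (hρp : ρp = ((N : ℂ) - (b : ℂ))⁻¹ • (1 - (b : ℂ) • μp)) :
    ρp.PosSemidef ∧ ρp.trace = 1 ∧ ρp.mulVec (φ kmax) = 0 ∧
      (p kmax < 1 / m + (ε / m) * ((N - m) / (m - N * ε)) →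
        (Matrix.trace (μ₀ * ρp)).re < ε / m ∧ ρp ∉ SepSet d₁ d₂) := by
  -- real scalar facts
  have hmR : (0:ℝ) < (m:ℝ) := by exact_mod_cast hm0
  have hNR : (m:ℝ) < (N:ℝ) := by exact_mod_cast hm
  have hpm1 : (1:ℝ) ≤ m * p kmax := by
    have h1 : (1:ℝ) = ∑ k, p k := hpsum.symm
    have h2 : ∑ k, p k ≤ ∑ _k : Fin m, p kmax := Finset.sum_le_sum fun k _ => hkmax k
    have h3 : ∑ _k : Fin m, p kmax = m * p kmax := by
      rw [Finset.sum_const, Finset.card_univ, Fintype.card_fin, nsmul_eq_mul]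
    linarith
  have htpos : 0 < p kmax := by nlinarith
  have ht1 : p kmax ≤ 1 := by
    have := Finset.single_le_sum (f := p) (fun k _ => hp k) (Finset.mem_univ kmax)
    linarith [hpsum ▸ this]
  have hinv : p kmax * (p kmax)⁻¹ = 1 := mul_inv_cancel₀ htpos.ne'
  have hb1 : 1 ≤ b := by rw [hb]; nlinarith
  have hbm : b ≤ m := by rw [hb]; nlinarith [inv_pos.mpr htpos]
  have hbN : b < N := lt_of_le_of_lt hbm hNR
  have hNb : (0:ℝ) < (N:ℝ) - b := by linarith
  have hNbC : ((N:ℂ) - (b:ℂ)) ≠ 0 := by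
    have : (((N:ℝ) - b : ℝ) : ℂ) ≠ 0 := Complex.ofReal_ne_zero.mpr hNb.ne'
    push_cast at this
    exact this
  have hbt : b * p kmax = 1 := by rw [hb]; field_simp
  have hbpk : ∀ k, b * p k ≤ 1 := fun k => by
    rw [← hbt]
    have hb0 : (0:ℝ) ≤ b := by linarith
    nlinarith [hkmax k]
  -- mulVec facts
  have hμv : ∀ j, μp *ᵥ φ j = ((p j : ℂ)) • φ j := by
    intro j
    rw [hμp, sum_mulVec']
    have hterm : ∀ k, ((p k : ℂ) • outer (φ k)) *ᵥ φ j
        = ((p k : ℂ) * if k = j then 1 else 0) • φ k := by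
      intro k
      rw [Matrix.smul_mulVec, outer_mulVec, horth k j, smul_smul]
    simp_rw [hterm]
    rw [Finset.sum_eq_single j (fun l _ hl => by rw [if_neg hl]; simp) (by simp)]
    rw [if_pos rfl, mul_one]
  have hρv : ∀ j, ρp *ᵥ φ j
      = (((N:ℂ) - (b:ℂ))⁻¹ * (1 - (b:ℂ) * (p j : ℂ))) • φ j := by
    intro j
    rw [hρp, Matrix.smul_mulVec, Matrix.sub_mulVec, Matrix.one_mulVec, Matrix.smul_mulVec,
      hμv j, smul_smul]
    rw [show φ j - ((b:ℂ) * (p j : ℂ)) • φ j = (1 - (b:ℂ) * (p j : ℂ)) • φ j by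
      rw [sub_smul, one_smul], smul_smul]
  have hnull : ρp *ᵥ φ kmax = 0 := by
    rw [hρv kmax]
    have : (1 : ℂ) - (b:ℂ) * ((p kmax : ℝ) : ℂ) = 0 := by
      have : ((b * p kmax : ℝ) : ℂ) = 1 := by rw [hbt]; norm_num
      push_cast at this
      rw [this]; ring
    rw [this, mul_zero, zero_smul]
  -- traces
  have htr_outer : ∀ k : Fin m, Matrix.trace (outer (φ k)) = 1 := by
    intro k
    have h := trace_outer_mul (φ k) 1
    rw [mul_one] at h
    rw [h, Matrix.one_mulVec, horth k k, if_pos rfl]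
  have htrμp : Matrix.trace μp = 1 := by
    rw [hμp, Matrix.trace_sum]
    simp_rw [Matrix.trace_smul, htr_outer, smul_eq_mul, mul_one]
    rw [← Complex.ofReal_sum, hpsum, Complex.ofReal_one]
  have hcard : ((Fintype.card (Fin d₁ × Fin d₂) : ℕ) : ℂ) = (N : ℂ) := by
    simp [hN]
  have htrρ : ρp.trace = 1 := by
    rw [hρp, Matrix.trace_smul, Matrix.trace_sub, Matrix.trace_one, Matrix.trace_smul, htrμp,
      hcard, smul_eq_mul, smul_eq_mul, mul_one]
    exact inv_mul_cancel₀ hNbC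
  -- hermitian
  have hμpH : μpᴴ = μp := by
    rw [hμp, Matrix.conjTranspose_sum]
    refine Finset.sum_congr rfl fun k _ => ?_
    rw [Matrix.conjTranspose_smul, outer_isHermitian (φ k)]
    congr 1
    simp [Complex.star_def, Complex.conj_ofReal]
  have hρpH : ρp.IsHermitian := by
    show ρpᴴ = ρp
    rw [hρp, Matrix.conjTranspose_smul, Matrix.conjTranspose_sub, Matrix.conjTranspose_one,
      Matrix.conjTranspose_smul, hμpH,
      show star ((b:ℂ)) = (b:ℂ) by simp [Complex.star_def, Complex.conj_ofReal],
      show star (((N:ℂ) - (b:ℂ))⁻¹) = ((N:ℂ) - (b:ℂ))⁻¹ by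
        simp [Complex.star_def, map_inv₀, map_sub, Complex.conj_ofReal]]
  -- PSD
  have hPSD : ρp.PosSemidef := by
    refine Matrix.PosSemidef.of_dotProduct_mulVec_nonneg hρpH fun x => ?_
    set c : Fin m → ℂ := fun k => star (φ k) ⬝ᵥ x with hc
    have hμx : star x ⬝ᵥ (μp *ᵥ x) = ((∑ k, p k * Complex.normSq (c k) : ℝ) : ℂ) := by
      rw [hμp, sum_mulVec', dotProduct_sum']
      push_cast
      refine Finset.sum_congr rfl fun k _ => ?_
      rw [Matrix.smul_mulVec, outer_mulVec, dotProduct_smul, dotProduct_smul,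
        dot_star_comm x (φ k), smul_eq_mul, smul_eq_mul]
      rw [show (star (φ k) ⬝ᵥ x) = c k from rfl]
      rw [show (star (c k)) = (starRingEnd ℂ) (c k) from rfl]
      rw [mul_comm (c k) _, ← Complex.normSq_eq_conj_mul_self]
    have hval : star x ⬝ᵥ (ρp *ᵥ x)
        = ((((N:ℝ) - b)⁻¹ * ((∑ i, Complex.normSq (x i))
            - b * ∑ k, p k * Complex.normSq (c k)) : ℝ) : ℂ) := by
      rw [hρp, Matrix.smul_mulVec, Matrix.sub_mulVec, Matrix.one_mulVec, Matrix.smul_mulVec,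
        dotProduct_smul, dotProduct_sub, dotProduct_smul, hμx, dot_star_self_eq]
      simp only [smul_eq_mul]
      push_cast
      ring
    rw [hval]
    rw [Complex.zero_le_real]
    have hB := bessel φ horth x
    have hsum_le : ∑ k, p k * Complex.normSq (c k) ≤ ∑ k, Complex.normSq (c k) := by
      refine Finset.sum_le_sum fun k _ => ?_
      have := Complex.normSq_nonneg (c k)
      nlinarith [ht1, hkmax k, hp k]
    have hb0 : (0:ℝ) ≤ b := by linarith
    have hbsum : b * ∑ k, p k * Complex.normSq (c k) ≤ ∑ k, Complex.normSq (c k) := by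
      have h1 : b * ∑ k, p k * Complex.normSq (c k) = ∑ k, (b * p k) * Complex.normSq (c k) := by
        rw [Finset.mul_sum]; exact Finset.sum_congr rfl fun k _ => by ring
      rw [h1]
      calc ∑ k, (b * p k) * Complex.normSq (c k) ≤ ∑ k, 1 * Complex.normSq (c k) := by
            refine Finset.sum_le_sum fun k _ => ?_
            exact mul_le_mul_of_nonneg_right (hbpk k) (Complex.normSq_nonneg _)
        _ = ∑ k, Complex.normSq (c k) := by simp
    have : (0:ℝ) ≤ (∑ i, Complex.normSq (x i)) - b * ∑ k, p k * Complex.normSq (c k) := by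
      linarith
    exact mul_nonneg (le_of_lt (inv_pos.mpr hNb)) this
  -- trace μ₀ ρp
  have htrμ₀ρ : Matrix.trace (μ₀ * ρp)
      = (((m:ℝ)⁻¹ * (((N:ℝ) - b)⁻¹ * ((m:ℝ) - b)) : ℝ) : ℂ) := by
    rw [hμ₀, Matrix.smul_mul, Matrix.trace_smul, Finset.sum_mul, Matrix.trace_sum]
    simp_rw [trace_outer_mul, hρv]
    have hterm : ∀ k : Fin m, star (φ k) ⬝ᵥ ((((N:ℂ) - (b:ℂ))⁻¹ * (1 - (b:ℂ) * (p k:ℂ))) • φ k)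
        = ((N:ℂ) - (b:ℂ))⁻¹ * (1 - (b:ℂ) * (p k:ℂ)) := by
      intro k
      rw [dotProduct_smul, horth k k, if_pos rfl, smul_eq_mul, mul_one]
    simp_rw [hterm]
    rw [← Finset.mul_sum]
    have hsum : ∑ k : Fin m, (1 - (b:ℂ) * (p k:ℂ)) = (m:ℂ) - (b:ℂ) := by
      rw [Finset.sum_sub_distrib, Finset.sum_const, Finset.card_univ, Fintype.card_fin,
        ← Finset.mul_sum, ← Complex.ofReal_sum]
      push_cast [hpsum]
      ring
    rw [Finset.mul_sum, ← Finset.mul_sum, hsum, smul_eq_mul]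
    push_cast
    ring
  refine ⟨hPSD, htrρ, hnull, fun hcond => ?_⟩
  -- the inequality
  have hmNε : (0:ℝ) < (m:ℝ) - N * ε := by
    linarith [(div_lt_one hmR).mp hεsmall]
  have hNpos : (0:ℝ) < (N:ℝ) := by linarith
  have hε1 : ε < 1 := by
    have h4 : (N:ℝ) * ε < N * 1 := by linarith
    exact lt_of_mul_lt_mul_left h4 (le_of_lt hNpos)
  have hrhs : 1 / (m:ℝ) + ε / m * (((N:ℝ) - m) / ((m:ℝ) - N * ε)) = (1 - ε) / ((m:ℝ) - N * ε) := by
    have := hmNε.ne'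
    rw [div_mul_div_comm, div_add_div _ _ hmR.ne' (mul_ne_zero hmR.ne' this),
      div_eq_div_iff (mul_ne_zero hmR.ne' (mul_ne_zero hmR.ne' this)) this]
    ring
  rw [hrhs] at hcond
  have h1 : p kmax * ((m:ℝ) - N * ε) < 1 - ε := (lt_div_iff₀ hmNε).mp hcond
  have hbpos : (0:ℝ) < b := by linarith
  have h5 : b * (p kmax * ((m:ℝ) - N * ε)) < b * (1 - ε) :=
    mul_lt_mul_of_pos_left h1 hbpos
  have h6 : b * (p kmax * ((m:ℝ) - N * ε)) = (m:ℝ) - N * ε := by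
    rw [← mul_assoc, hbt, one_mul]
  have h2 : (m:ℝ) - b < ε * ((N:ℝ) - b) := by
    have h8 : b * (1 - ε) = b - b * ε := by ring
    have h9 : ε * ((N:ℝ) - b) = ε * N - b * ε := by ring
    have h10 : (N:ℝ) * ε = ε * N := by ring
    linarith
  have hlt : (Matrix.trace (μ₀ * ρp)).re < ε / m := by
    rw [htrμ₀ρ, Complex.ofReal_re]
    have h3 : ((N:ℝ) - b)⁻¹ * ((m:ℝ) - b) < ε := by
      rw [inv_mul_lt_iff₀ hNb]
      linarith [show ((N:ℝ) - b) * ε = ε * ((N:ℝ) - b) from mul_comm _ _]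
    calc (m:ℝ)⁻¹ * (((N:ℝ) - b)⁻¹ * ((m:ℝ) - b)) < (m:ℝ)⁻¹ * ε :=
          mul_lt_mul_of_pos_left h3 (inv_pos.mpr hmR)
      _ = ε / m := by rw [div_eq_mul_inv]; ring
  refine ⟨hlt, fun hmem => ?_⟩
  have hnonneg : ∀ y ∈ ((fun σ => (Matrix.trace (μ₀ * σ)).re) '' SepSet d₁ d₂), 0 ≤ y := by
    rintro y ⟨σ, hσ, rfl⟩
    have hsub : SepSet d₁ d₂ ⊆ {τ | 0 ≤ (Matrix.trace (μ₀ * τ)).re} := by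
      apply convexHull_min
      · rintro M ⟨a, bb, ha, hbb, rfl⟩
        simp only [Set.mem_setOf_eq]
        set ψ : Fin d₁ × Fin d₂ → ℂ := fun q => a q.1 * bb q.2 with hψ
        have : Matrix.trace (μ₀ * outer ψ)
            = (((m:ℝ)⁻¹ * ∑ k, Complex.normSq (star (φ k) ⬝ᵥ ψ) : ℝ) : ℂ) := by
          rw [hμ₀, Matrix.smul_mul, Matrix.trace_smul, Finset.sum_mul, Matrix.trace_sum]
          simp_rw [trace_outer_mul, outer_mulVec]
          have hterm : ∀ k : Fin m, star (φ k) ⬝ᵥ ((star ψ ⬝ᵥ φ k) • ψ)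
              = (Complex.normSq (star (φ k) ⬝ᵥ ψ) : ℂ) := by
            intro k
            rw [dotProduct_smul, smul_eq_mul, dot_star_comm ψ (φ k)]
            rw [show (star (star (φ k) ⬝ᵥ ψ)) = (starRingEnd ℂ) (star (φ k) ⬝ᵥ ψ) from rfl]
            rw [← Complex.normSq_eq_conj_mul_self]
          simp_rw [hterm]
          rw [smul_eq_mul]
          push_cast
          ring
        rw [this, Complex.ofReal_re]
        have : (0:ℝ) ≤ ∑ k, Complex.normSq (star (φ k) ⬝ᵥ ψ) :=
          Finset.sum_nonneg fun k _ => Complex.normSq_nonneg _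
        exact mul_nonneg (inv_nonneg.mpr hmR.le) this
      · intro σ₁ h1 σ₂ h2 s t hs ht hst
        simp only [Set.mem_setOf_eq] at *
        have : Matrix.trace (μ₀ * (s • σ₁ + t • σ₂))
            = s • Matrix.trace (μ₀ * σ₁) + t • Matrix.trace (μ₀ * σ₂) := by
          rw [Matrix.mul_add, Matrix.trace_add, Matrix.mul_smul, Matrix.mul_smul,
            Matrix.trace_smul, Matrix.trace_smul]
        rw [this, Complex.add_re, Complex.smul_re, Complex.smul_re]
        exact add_nonneg (mul_nonneg hs h1) (mul_nonneg ht h2)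
    exact hsub hσ
  have hmem' : (Matrix.trace (μ₀ * ρp)).re
      ∈ ((fun σ => (Matrix.trace (μ₀ * σ)).re) '' SepSet d₁ d₂) := ⟨ρp, hmem, rfl⟩
  have hle : ε / m ≤ (Matrix.trace (μ₀ * ρp)).re := by
    rw [hε]
    exact csInf_le ⟨0, hnonneg⟩ hmem'
  linarith
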